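/- Let l be an odd prime and let b be a positive integer coprime to l. Write σ_b for the Frobenius of b in G = Gal(Q(μ_l)/Q) and ω for the Teichmüller character with b̄ = b mod l. Then (1 - b·σ_b^{-1}) generates the ideal Ann_{Z_l[G]}(μ_l) of Z_l[G] if and only if both (1) ω(b̄) is a generator of the group μ_{l-1} of (l-1)-st roots of unity in Z_l^×, and (2) b ≢ ω(b̄) mod l² (as elements of Z_l). -/

import Mathlib

open MonoidAlgebra

variable {l : ℕ} [Fact l.Prime]

noncomputable def chiHom {S : Type*} [CommRing S] (f : ℤ_[l] →+* S) (g : (ZMod l)ˣ →* S) :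
    MonoidAlgebra ℤ_[l] (ZMod l)ˣ →+* S :=
  MonoidAlgebra.liftNCRingHom f g fun _ _ => Commute.all _ _

lemma chiHom_single {S : Type*} [CommRing S] (f : ℤ_[l] →+* S) (g : (ZMod l)ˣ →* S)
    (a : (ZMod l)ˣ) (c : ℤ_[l]) :
    chiHom f g (MonoidAlgebra.single a c) = f c * g a := by
  simp [chiHom, liftNCRingHom]

lemma chiHom_apply {S : Type*} [CommRing S] (f : ℤ_[l] →+* S) (g : (ZMod l)ˣ →* S)
    (x : MonoidAlgebra ℤ_[l] (ZMod l)ˣ) :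
    chiHom f g x = x.coeff.sum fun a c => f c * g a := by
  induction x using MonoidAlgebra.induction with
  | zero => simp
  | single_add a c x ha hc ih =>
    rw [map_add, chiHom_single, ih, MonoidAlgebra.coeff_add, Finsupp.sum_add_index' (by simp) (by intros; rw [map_add, add_mul]),
      MonoidAlgebra.coeff_single, Finsupp.sum_single_index (by simp)]

lemma chiHom_smul {S : Type*} [CommRing S] (f : ℤ_[l] →+* S) (g : (ZMod l)ˣ →* S)
    (r : ℤ_[l]) (x : MonoidAlgebra ℤ_[l] (ZMod l)ˣ) :
    chiHom f g (r • x) = f r * chiHom f g x :=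
  MonoidAlgebra.liftNC_smul f g r x

lemma toZMod_eq_zero_iff (x : ℤ_[l]) : PadicInt.toZMod x = 0 ↔ ((l : ℤ_[l]) ∣ x) := by
  rw [← RingHom.mem_ker, PadicInt.ker_toZMod, PadicInt.maximalIdeal_eq_span_p,
    Ideal.mem_span_singleton]

/-- the characters into `ZMod l` -/
noncomputable def chi (i : ℕ) : MonoidAlgebra ℤ_[l] (ZMod l)ˣ →+* ZMod l :=
  chiHom (PadicInt.toZMod) ((Units.coeHom (ZMod l)).comp (powMonoidHom i))

lemma chi_single (i : ℕ) (a : (ZMod l)ˣ) (c : ℤ_[l]) :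
    chi i (MonoidAlgebra.single a c) = PadicInt.toZMod c * ((a : ZMod l)) ^ i := by
  rw [chi, chiHom_single]; simp [powMonoidHom]


/-- Lemma 6.1 of the paper: for an odd prime `l` and `b` coprime to `l`, the element
`1 - b·σ_b⁻¹` generates the annihilator ideal `Ann_{ℤ_l[G]}(μ_l)` (where
`G = Gal(ℚ(μ_l)/ℚ) ≅ (ℤ/l)ˣ` acts on `μ_l ≅ ℤ/l` by `σ_a : ζ ↦ a·ζ`) if and only if
(1) `ω(b̄)` generates `μ_{l-1} ⊂ ℤ_lˣ`, and (2) `b ≢ ω(b̄) mod l²`. -/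
theorem stmt_7 (l : ℕ) [Fact l.Prime] (hl : Odd l)
    (ω : (ZMod l)ˣ →* ℤ_[l]ˣ)
    (hω : ∀ a : (ZMod l)ˣ, PadicInt.toZMod ((ω a : ℤ_[l]ˣ) : ℤ_[l]) = (a : ZMod l))
    (b : ℕ) (hb : Nat.Coprime b l) :
    (∀ x : MonoidAlgebra ℤ_[l] (ZMod l)ˣ,
        x ∈ Ideal.span
          {(1 : MonoidAlgebra ℤ_[l] (ZMod l)ˣ) -
            MonoidAlgebra.single ((ZMod.unitOfCoprime b hb)⁻¹) (b : ℤ_[l])} ↔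
        ∀ ζ : ZMod l,
          x.coeff.sum (fun a c => PadicInt.toZMod c * ((a : ZMod l) * ζ)) = 0) ↔
      (orderOf (ω (ZMod.unitOfCoprime b hb)) = l - 1 ∧
        ((b : ℤ_[l]) - ((ω (ZMod.unitOfCoprime b hb) : ℤ_[l]ˣ) : ℤ_[l])) ∉
          Ideal.span {((l : ℤ_[l]) ^ 2)}) := by
  have hlp : l.Prime := Fact.out
  set u : (ZMod l)ˣ := ZMod.unitOfCoprime b hb with hu
  set e : MonoidAlgebra ℤ_[l] (ZMod l)ˣ :=
    1 - MonoidAlgebra.single (u⁻¹) (b : ℤ_[l]) with he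
  set ζ : ℤ_[l]ˣ := ω u with hζ
  -- basic facts
  have hbu : PadicInt.toZMod ((b : ℤ_[l])) = (u : ZMod l) := by
    rw [map_natCast, hu, ZMod.coe_unitOfCoprime]
  have hzu : PadicInt.toZMod ((ζ : ℤ_[l]ˣ) : ℤ_[l]) = (u : ZMod l) := hω u
  -- χ₁ of e is zero
  have hchie : ∀ i : ℕ, chi i e = 1 - (u : ZMod l) * ((u⁻¹ : (ZMod l)ˣ) : ZMod l) ^ i := by
    intro i
    rw [he, map_sub, map_one, chi_single, hbu]
  -- the inner ∀ζ condition is equivalent to `chi 1 x = 0`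
  have hann : ∀ x : MonoidAlgebra ℤ_[l] (ZMod l)ˣ,
      (∀ z : ZMod l, x.coeff.sum (fun a c => PadicInt.toZMod c * ((a : ZMod l) * z)) = 0) ↔
        chi 1 x = 0 := by
    intro x
    rw [chi, chiHom_apply]
    constructor
    · intro h
      have := h 1
      simpa [powMonoidHom] using this
    · intro h z
      have : (x.coeff.sum fun a c => PadicInt.toZMod c * ((a : ZMod l) * z)) =
          (x.coeff.sum fun a c => PadicInt.toZMod c *
            ((Units.coeHom (ZMod l)).comp (powMonoidHom 1) a)) * z := by
        rw [Finsupp.sum_mul]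
        apply Finsupp.sum_congr
        intro a _
        simp [powMonoidHom]; ring
      rw [this, h, zero_mul]
  have horder : orderOf u = orderOf ζ := by
    refine dvd_antisymm (orderOf_dvd_of_pow_eq_one ?_) (orderOf_dvd_of_pow_eq_one ?_)
    · have h1 : ω (u ^ orderOf ζ) = 1 := by rw [map_pow, ← hζ, pow_orderOf_eq_one]
      have h2 := hω (u ^ orderOf ζ)
      rw [h1] at h2
      ext
      simpa using h2.symm
    · rw [hζ, ← map_pow, pow_orderOf_eq_one, map_one]
  have hcard : Fintype.card (ZMod l)ˣ = l - 1 := ZMod.card_units l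
  have hl3 : 2 ≤ l := hlp.two_le
  constructor
  · intro H
    have Hdvd : ∀ x, chi 1 x = 0 → e ∣ x := fun x hx =>
      Ideal.mem_span_singleton.mp ((H x).mpr ((hann x).mpr hx))
    constructor
    · by_contra hne
      have hdu : orderOf u ∣ l - 1 := by rw [← hcard]; exact orderOf_dvd_card
      have hdlt : orderOf u < l - 1 :=
        lt_of_le_of_ne (Nat.le_of_dvd (by omega) hdu) (fun h => hne (horder ▸ h))
      obtain ⟨g, hg⟩ := IsCyclic.exists_generator (α := (ZMod l)ˣ)
      have hgord : orderOf g = l - 1 := by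
        rw [orderOf_eq_card_of_forall_mem_zpowers hg, Nat.card_eq_fintype_card, hcard]
      set xg := MonoidAlgebra.single g (1:ℤ_[l]) -
        MonoidAlgebra.single (1:(ZMod l)ˣ) ((ω g : ℤ_[l]ˣ) : ℤ_[l]) with hxg
      have h1 : chi 1 xg = 0 := by
        rw [hxg, map_sub, chi_single, chi_single, hω g]; simp
      obtain ⟨y, hy⟩ := Hdvd xg h1
      set i := orderOf u + 1 with hi
      have h2 : (u⁻¹) ^ i = u⁻¹ := by
        rw [inv_pow, pow_succ, pow_orderOf_eq_one, one_mul]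
      have hchei : chi i e = 0 := by
        rw [hchie i, ← Units.val_pow_eq_pow_val, h2, Units.mul_inv, sub_self]
      have h3 : chi i xg = 0 := by rw [hy, map_mul, hchei, zero_mul]
      rw [hxg, map_sub, chi_single, chi_single, hω g] at h3
      have h4 : g ^ i = g := by
        ext
        rw [Units.val_pow_eq_pow_val]
        simpa [sub_eq_zero] using h3
      have h5 : g ^ orderOf u = 1 := by
        have := h4
        rw [hi, pow_succ] at this
        exact mul_right_cancel (by rw [this, one_mul])
      have h6 : l - 1 ∣ orderOf u := hgord ▸ orderOf_dvd_of_pow_eq_one h5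
      have := Nat.le_of_dvd (orderOf_pos u) h6
      omega
    · intro hmem
      rw [Ideal.mem_span_singleton] at hmem
      have hl1 : chi 1 ((l : MonoidAlgebra ℤ_[l] (ZMod l)ˣ)) = 0 := by
        rw [map_natCast]; exact ZMod.natCast_self l
      obtain ⟨y, hy⟩ := Hdvd _ hl1
      set ψ : MonoidAlgebra ℤ_[l] (ZMod l)ˣ →+* ℤ_[l] :=
        chiHom (RingHom.id ℤ_[l]) ((Units.coeHom ℤ_[l]).comp ω) with hψ
      have hψl : (l : ℤ_[l]) = ψ e * ψ y := by rw [← map_mul, ← hy, map_natCast]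
      have hψe : ψ e = ((ζ⁻¹ : ℤ_[l]ˣ) : ℤ_[l]) * (((ζ : ℤ_[l]ˣ) : ℤ_[l]) - (b : ℤ_[l])) := by
        rw [he, map_sub, map_one, chiHom_single]
        rw [mul_sub, ← Units.val_mul, inv_mul_cancel]
        simp [hζ]
        ring
      have hdvd' : ((b : ℤ_[l]) - ((ζ : ℤ_[l]ˣ) : ℤ_[l])) ∣ (l : ℤ_[l]) := by
        refine ⟨-(((ζ⁻¹ : ℤ_[l]ˣ) : ℤ_[l]) * ψ y), ?_⟩
        rw [hψl, hψe]; ring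
      have hfin : ((l : ℤ_[l]) * (l:ℤ_[l])) ∣ ((l:ℤ_[l]) * 1) := by
        rw [mul_one, ← pow_two]
        exact dvd_trans hmem hdvd'
      have hlne : (l : ℤ_[l]) ≠ 0 := (PadicInt.prime_p).ne_zero
      exact (PadicInt.prime_p).not_unit
        (isUnit_of_dvd_one ((mul_dvd_mul_iff_left hlne).mp hfin))
  · rintro ⟨h1, h2⟩
    rw [Ideal.mem_span_singleton] at h2
    have hordu : orderOf u = l - 1 := by rw [horder, h1]
    have hlne : (l : ℤ_[l]) ≠ 0 := (PadicInt.prime_p).ne_zero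
    have isUnit_of_not_dvd : ∀ x : ℤ_[l], ¬ ((l:ℤ_[l]) ∣ x) → IsUnit x := by
      intro x h
      rw [PadicInt.isUnit_iff]
      rcases lt_or_eq_of_le (PadicInt.norm_le_one x) with h'|h'
      · exact absurd ((PadicInt.norm_lt_one_iff_dvd x).mp h') h
      · exact h'
    set z : ℤ_[l] := ((ζ:ℤ_[l]ˣ):ℤ_[l]) with hz
    have hlbz : (l : ℤ_[l]) ∣ ((b:ℤ_[l]) - z) := by
      rw [← toZMod_eq_zero_iff, map_sub, hbu, hzu, sub_self]
    set n := l - 1 with hn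
    have hn1 : 1 ≤ n := by omega
    have hzn : z ^ n = 1 := by
      rw [hz, ← Units.val_pow_eq_pow_val, ← h1, pow_orderOf_eq_one, Units.val_one]
    set w : ℤ_[l] := ∑ i ∈ Finset.range n, (b:ℤ_[l]) ^ i * z ^ (n - 1 - i) with hw
    have hgeom : w * ((b:ℤ_[l]) - z) = (b:ℤ_[l]) ^ n - 1 := by
      rw [hw, geom_sum₂_mul, hzn]
    have hwne : ¬ (l:ℤ_[l]) ∣ w := by
      rw [← toZMod_eq_zero_iff]
      have hts : PadicInt.toZMod w = (n : ZMod l) * (u:ZMod l)^(n-1) := by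
        have hterm : ∀ i ∈ Finset.range n,
            PadicInt.toZMod ((b:ℤ_[l])^i * z^(n-1-i)) = (u:ZMod l)^(n-1) := by
          intro i hi
          rw [map_mul, map_pow, map_pow, hbu, hzu, ← pow_add]
          congr 1
          rw [Finset.mem_range] at hi
          omega
        rw [hw, map_sum, Finset.sum_congr rfl hterm, Finset.sum_const, Finset.card_range,
          nsmul_eq_mul]
      rw [hts]
      intro hcon
      have h1n : ((n:ℕ) : ZMod l) ≠ 0 := by
        rw [Ne, ZMod.natCast_eq_zero_iff]
        intro hdvd
        have := Nat.le_of_dvd (by omega) hdvd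
        omega
      exact (mul_ne_zero h1n (pow_ne_zero _ (Units.ne_zero u))) hcon
    have hl2bn : ¬ ((l:ℤ_[l]) * (l:ℤ_[l])) ∣ ((b:ℤ_[l])^n - 1) := by
      intro hcon
      obtain ⟨t, ht⟩ := hlbz
      rw [← hgeom, ht] at hcon
      have hcon2 : (l:ℤ_[l]) * (l:ℤ_[l]) ∣ (l:ℤ_[l]) * (w * t) := by
        have : w * ((l:ℤ_[l]) * t) = (l:ℤ_[l]) * (w * t) := by ring
        rwa [this] at hcon
      have := (mul_dvd_mul_iff_left hlne).mp hcon2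
      rcases (PadicInt.prime_p).dvd_mul.mp this with h'|h'
      · exact hwne h'
      · obtain ⟨t', ht'⟩ := h'
        exact h2 ⟨t', by rw [ht, ht', pow_two]; ring⟩
    have hlbn : (l:ℤ_[l]) ∣ ((b:ℤ_[l])^n - 1) := by
      rw [← hgeom]; exact Dvd.dvd.mul_left hlbz w
    obtain ⟨y, hy⟩ := hlbn
    have hyunit : IsUnit y := by
      apply isUnit_of_not_dvd
      intro ⟨t, ht⟩
      exact hl2bn ⟨t, by rw [hy, ht]; ring⟩
    obtain ⟨v, hv⟩ := hyunit
    have hbl : ((b:ℤ_[l])^n - 1) ∣ (l:ℤ_[l]) := by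
      refine ⟨((v⁻¹ : ℤ_[l]ˣ) : ℤ_[l]), ?_⟩
      have hbv : (b:ℤ_[l])^n - 1 = (l:ℤ_[l]) * v := by rw [hy, hv]
      rw [hbv, mul_assoc, Units.mul_inv, mul_one]
    have hbunit : IsUnit (b:ℤ_[l]) := by
      apply isUnit_of_not_dvd
      rw [← toZMod_eq_zero_iff, hbu]
      exact Units.ne_zero u
    obtain ⟨bu, hbuv⟩ := hbunit
    have hstep : e ∣ (MonoidAlgebra.single (u⁻¹) (1:ℤ_[l]) -
        MonoidAlgebra.single (1:(ZMod l)ˣ) ((bu⁻¹ : ℤ_[l]ˣ):ℤ_[l])) := by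
      refine ⟨-(MonoidAlgebra.single (1:(ZMod l)ˣ) ((bu⁻¹:ℤ_[l]ˣ):ℤ_[l])), ?_⟩
      have hbc : (b:ℤ_[l]) * ((bu⁻¹:ℤ_[l]ˣ):ℤ_[l]) = 1 := by
        rw [← hbuv, Units.mul_inv]
      rw [he, mul_neg, sub_mul, one_mul, MonoidAlgebra.single_mul_single, hbc]
      simp [neg_sub]
    have hpow : ∀ k : ℕ, e ∣ ((MonoidAlgebra.single (u⁻¹) (1:ℤ_[l])) ^ k -
        MonoidAlgebra.single (1:(ZMod l)ˣ) (((bu⁻¹)^k : ℤ_[l]ˣ) : ℤ_[l])) := by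
      intro k
      induction k with
      | zero => simp [← MonoidAlgebra.one_def]
      | succ k ih =>
        have e1 : MonoidAlgebra.single (1:(ZMod l)ˣ) ((bu⁻¹^k:ℤ_[l]ˣ):ℤ_[l]) *
            MonoidAlgebra.single (1:(ZMod l)ˣ) ((bu⁻¹:ℤ_[l]ˣ):ℤ_[l]) =
            MonoidAlgebra.single (1:(ZMod l)ˣ) ((bu⁻¹^(k+1):ℤ_[l]ˣ):ℤ_[l]) := by
          rw [MonoidAlgebra.single_mul_single, one_mul, ← Units.val_mul, ← pow_succ]
        have key : (MonoidAlgebra.single (u⁻¹) (1:ℤ_[l]))^(k+1) -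
            MonoidAlgebra.single (1:(ZMod l)ˣ) ((bu⁻¹^(k+1):ℤ_[l]ˣ):ℤ_[l]) =
            (MonoidAlgebra.single (u⁻¹) (1:ℤ_[l])) *
              ((MonoidAlgebra.single (u⁻¹) (1:ℤ_[l]))^k -
                MonoidAlgebra.single (1:(ZMod l)ˣ) ((bu⁻¹^k:ℤ_[l]ˣ):ℤ_[l])) +
            (MonoidAlgebra.single (1:(ZMod l)ˣ) ((bu⁻¹^k:ℤ_[l]ˣ):ℤ_[l])) *
              ((MonoidAlgebra.single (u⁻¹) (1:ℤ_[l])) -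
                MonoidAlgebra.single (1:(ZMod l)ˣ) ((bu⁻¹:ℤ_[l]ˣ):ℤ_[l])) := by
          rw [mul_sub, mul_sub, e1]; ring
        rw [key]
        exact dvd_add (Dvd.dvd.mul_left ih _) (Dvd.dvd.mul_left hstep _)
    have hgen : ∀ a : (ZMod l)ˣ, ∃ c : ℤ_[l],
        e ∣ (MonoidAlgebra.single a (1:ℤ_[l]) - MonoidAlgebra.single (1:(ZMod l)ˣ) c) ∧
          PadicInt.toZMod c = (a : ZMod l) := by
      intro a
      have hzp : Subgroup.zpowers (u⁻¹) = ⊤ := by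
        apply Subgroup.eq_top_of_card_eq
        rw [Nat.card_zpowers, orderOf_inv, hordu, Nat.card_eq_fintype_card, hcard]
      have hmem : a ∈ Submonoid.powers (u⁻¹) := by
        rw [mem_powers_iff_mem_zpowers, hzp]; trivial
      obtain ⟨k, hk0⟩ := hmem
      have hk : u⁻¹ ^ k = a := hk0
      refine ⟨((bu⁻¹^k : ℤ_[l]ˣ):ℤ_[l]), ?_, ?_⟩
      · have h0 := hpow k
        rwa [MonoidAlgebra.single_pow, one_pow, hk] at h0
      · have hmap : Units.map (PadicInt.toZMod : ℤ_[l] →+* ZMod l).toMonoidHom bu = u := by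
          ext
          rw [Units.coe_map]
          simp only [RingHom.toMonoidHom_eq_coe, MonoidHom.coe_coe]
          rw [hbuv, hbu]
        calc PadicInt.toZMod ((bu⁻¹^k:ℤ_[l]ˣ):ℤ_[l])
            = ((Units.map (PadicInt.toZMod : ℤ_[l] →+* ZMod l).toMonoidHom (bu⁻¹^k) :
                (ZMod l)ˣ) : ZMod l) := rfl
          _ = ((u⁻¹^k : (ZMod l)ˣ) : ZMod l) := by rw [map_pow, map_inv, hmap]
          _ = (a : ZMod l) := by rw [hk]
    have hC2 : ∀ x : MonoidAlgebra ℤ_[l] (ZMod l)ˣ, ∃ c : ℤ_[l],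
        e ∣ (x - MonoidAlgebra.single (1:(ZMod l)ˣ) c) ∧ PadicInt.toZMod c = chi 1 x := by
      intro x
      induction x using MonoidAlgebra.induction_on with
      | of a =>
        obtain ⟨ca, ha1, ha2⟩ := hgen a
        refine ⟨ca, ha1, ?_⟩
        rw [ha2, MonoidAlgebra.of_apply, chi_single, pow_one, map_one, one_mul]
      | add f g hf hg =>
        obtain ⟨c1, hc1, hc1'⟩ := hf
        obtain ⟨c2, hc2, hc2'⟩ := hg
        refine ⟨c1 + c2, ?_, ?_⟩
        · have key : f + g - MonoidAlgebra.single (1:(ZMod l)ˣ) (c1 + c2) =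
              (f - MonoidAlgebra.single (1:(ZMod l)ˣ) c1) +
              (g - MonoidAlgebra.single (1:(ZMod l)ˣ) c2) := by
            rw [MonoidAlgebra.single_add]
            abel
          rw [key]
          exact dvd_add hc1 hc2
        · rw [map_add, map_add, hc1', hc2']
      | smul r f hf =>
        obtain ⟨c, hc, hc'⟩ := hf
        refine ⟨r * c, ?_, ?_⟩
        · have key : r • f - MonoidAlgebra.single (1:(ZMod l)ˣ) (r * c) =
              r • (f - MonoidAlgebra.single (1:(ZMod l)ˣ) c) := by
            rw [smul_sub, MonoidAlgebra.smul_single']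
          rw [key]
          obtain ⟨t, ht⟩ := hc
          exact ⟨r • t, by rw [ht, mul_smul_comm]⟩
        · rw [map_mul, hc', chi, chiHom_smul]
    have hbn1 : e ∣ MonoidAlgebra.single (1:(ZMod l)ˣ) ((b:ℤ_[l])^n - 1) := by
      have h0 := hpow n
      have hun : (u⁻¹ : (ZMod l)ˣ)^n = 1 := by
        rw [inv_pow, ← hordu, pow_orderOf_eq_one, inv_one]
      rw [MonoidAlgebra.single_pow, one_pow, hun] at h0
      have h1' : (MonoidAlgebra.single (1:(ZMod l)ˣ) ((bu^n:ℤ_[l]ˣ):ℤ_[l])) *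
          (MonoidAlgebra.single (1:(ZMod l)ˣ) (1:ℤ_[l]) -
            MonoidAlgebra.single (1:(ZMod l)ˣ) ((bu⁻¹^n : ℤ_[l]ˣ):ℤ_[l])) =
          MonoidAlgebra.single (1:(ZMod l)ˣ) ((b:ℤ_[l])^n - 1) := by
        rw [mul_sub, MonoidAlgebra.single_mul_single, MonoidAlgebra.single_mul_single,
          one_mul, mul_one, ← Units.val_mul, ← mul_pow, mul_inv_cancel, one_pow, Units.val_one]
        rw [← MonoidAlgebra.single_sub]
        congr 1
        rw [Units.val_pow_eq_pow_val, hbuv]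
      rw [← h1']
      exact Dvd.dvd.mul_left h0 _
    have hC3 : ∀ c : ℤ_[l], (l:ℤ_[l]) ∣ c → e ∣ MonoidAlgebra.single (1:(ZMod l)ˣ) c := by
      rintro c ⟨t, ht⟩
      obtain ⟨v', hv'⟩ := hbl
      have hc : c = ((b:ℤ_[l])^n - 1) * (v' * t) := by rw [ht, hv']; ring
      have hsing : MonoidAlgebra.single (1:(ZMod l)ˣ) c =
          MonoidAlgebra.single (1:(ZMod l)ˣ) (v' * t) *
            MonoidAlgebra.single (1:(ZMod l)ˣ) ((b:ℤ_[l])^n - 1) := by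
        rw [MonoidAlgebra.single_mul_single, one_mul, hc]
        congr 1
        ring
      rw [hsing]
      exact Dvd.dvd.mul_left hbn1 _
    intro x
    rw [hann x, Ideal.mem_span_singleton]
    constructor
    · rintro ⟨y', rfl⟩
      rw [map_mul]
      have h0 : chi 1 e = 0 := by
        rw [hchie 1, pow_one, Units.mul_inv, sub_self]
      rw [h0, zero_mul]
    · intro hx
      obtain ⟨c, hc1, hc2⟩ := hC2 x
      have hlc : (l:ℤ_[l]) ∣ c := by rw [← toZMod_eq_zero_iff, hc2, hx]
      have h4 := dvd_add hc1 (hC3 c hlc)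
      rwa [sub_add_cancel] at h4
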